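/- Let m, d be positive integers, let c : {1,...,m} × {1,...,d} → ℝ be a matrix of nonnegative coefficients, and for x ∈ ℝ^d define α_k(x) = Σ_{j=1}^d c(k,j)·x_j, Φ(x) = ln(Σ_{k=1}^m exp(α_k(x))), and rate_j(x) = (Σ_{k=1}^m c(k,j)·exp(α_k(x))) / (Σ_{k=1}^m exp(α_k(x))). Set μ = 1 + 1/(3·ln(e·m)). If x, x' ∈ ℝ^d have nonnegative entries with x_j ≤ x'_j ≤ μ·x_j for every j, and max_{1≤k≤m} α_k(x) ≤ 3·ln(e·m), then Φ(x') − Φ(x) ≤ e · Σ_{j=1}^d rate_j(x)·(x'_j − x_j). -/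

import Mathlib

/-- Single-phase potential-increase bound: with the log-sum-exp potential
`Φ(x) = ln(Σ_k exp(α_k(x)))` of a nonnegative linear packing system and
`rate_j(x)` its partial derivatives, if `x_j ≤ x'_j ≤ μ·x_j` for
`μ = 1 + 1/(3·ln(e·m))`, and all constraint values at `x` are at most
`3·ln(e·m)`, then `Φ(x') − Φ(x) ≤ e · Σ_j rate_j(x)·(x'_j − x_j)`. -/
theorem stmt_6 (m d : ℕ) (hm : 0 < m) (hd : 0 < d)
    (c : Fin m → Fin d → ℝ) (hc : ∀ k j, 0 ≤ c k j)
    (α : (Fin d → ℝ) → Fin m → ℝ)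
    (hα : ∀ x k, α x k = ∑ j : Fin d, c k j * x j)
    (Φ : (Fin d → ℝ) → ℝ)
    (hΦ : ∀ x, Φ x = Real.log (∑ k : Fin m, Real.exp (α x k)))
    (rate : (Fin d → ℝ) → Fin d → ℝ)
    (hrate : ∀ x j, rate x j =
      (∑ k : Fin m, c k j * Real.exp (α x k)) / (∑ k : Fin m, Real.exp (α x k)))
    (μ : ℝ) (hμ : μ = 1 + 1 / (3 * Real.log (Real.exp 1 * m)))
    (x x' : Fin d → ℝ) (hx : ∀ j, 0 ≤ x j) (hx' : ∀ j, 0 ≤ x' j)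
    (hle : ∀ j, x j ≤ x' j) (hle' : ∀ j, x' j ≤ μ * x j)
    (hmax : ∀ k, α x k ≤ 3 * Real.log (Real.exp 1 * m)) :
    Φ x' - Φ x ≤ Real.exp 1 * ∑ j : Fin d, rate x j * (x' j - x j) := by
  have hne : (Finset.univ : Finset (Fin m)).Nonempty := by
    exact Finset.univ_nonempty_iff.mpr (Fin.pos_iff_nonempty.mp hm)
  set L := Real.log (Real.exp 1 * m) with hLdef
  have hL : 0 < L := Real.log_pos (by
    have h1 : (1:ℝ) ≤ m := by exact_mod_cast hm
    nlinarith [Real.exp_one_gt_d9])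
  have hS : 0 < ∑ k : Fin m, Real.exp (α x k) :=
    Finset.sum_pos (fun k _ => Real.exp_pos _) hne
  have hS' : 0 < ∑ k : Fin m, Real.exp (α x' k) :=
    Finset.sum_pos (fun k _ => Real.exp_pos _) hne
  set S := ∑ k : Fin m, Real.exp (α x k) with hSdef
  have hαnn : ∀ k, 0 ≤ α x k := fun k => by
    rw [hα]
    exact Finset.sum_nonneg fun j _ => mul_nonneg (hc k j) (hx j)
  have hmono : ∀ k, α x k ≤ α x' k := fun k => by
    rw [hα, hα]
    exact Finset.sum_le_sum fun j _ => mul_le_mul_of_nonneg_left (hle j) (hc k j)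
  have hdiff1 : ∀ k, α x' k - α x k ≤ 1 := by
    intro k
    have h1 : α x' k ≤ μ * α x k := by
      rw [hα, hα, Finset.mul_sum]
      refine Finset.sum_le_sum fun j _ => ?_
      calc c k j * x' j ≤ c k j * (μ * x j) :=
            mul_le_mul_of_nonneg_left (hle' j) (hc k j)
        _ = μ * (c k j * x j) := by ring
    have h2 : α x' k - α x k ≤ (μ - 1) * α x k := by nlinarith
    have h3 : (μ - 1) * α x k ≤ (1 / (3 * L)) * (3 * L) := by
      have hμ1 : μ - 1 = 1 / (3 * L) := by rw [hμ]; ring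
      rw [hμ1]
      exact mul_le_mul_of_nonneg_left (hmax k) (by positivity)
    have h4 : (1 / (3 * L)) * (3 * L) = 1 := by field_simp
    linarith
  have hkey : ∀ k, Real.exp (α x' k) - Real.exp (α x k)
      ≤ Real.exp 1 * Real.exp (α x k) * (α x' k - α x k) := by
    intro k
    set a := α x k; set b := α x' k
    have hab : a ≤ b := hmono k
    have h1 : Real.exp b - Real.exp a ≤ Real.exp b * (b - a) := by
      have h := Real.add_one_le_exp (a - b)
      rw [Real.exp_sub] at h
      have hb := Real.exp_pos b
      have h2 := mul_le_mul_of_nonneg_right h hb.le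
      rw [div_mul_cancel₀ _ hb.ne'] at h2
      nlinarith
    have h2 : Real.exp b ≤ Real.exp 1 * Real.exp a := by
      rw [← Real.exp_add]
      exact Real.exp_le_exp.mpr (by linarith [hdiff1 k])
    calc Real.exp b - Real.exp a ≤ Real.exp b * (b - a) := h1
      _ ≤ Real.exp 1 * Real.exp a * (b - a) :=
          mul_le_mul_of_nonneg_right h2 (by linarith)
  have step1 : Φ x' - Φ x ≤ (∑ k : Fin m, (Real.exp (α x' k) - Real.exp (α x k))) / S := by
    rw [hΦ, hΦ, ← Real.log_div (ne_of_gt hS') (ne_of_gt hS)]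
    have := Real.log_le_sub_one_of_pos (div_pos hS' hS)
    rw [Finset.sum_sub_distrib, sub_div]
    calc Real.log ((∑ k : Fin m, Real.exp (α x' k)) / S)
        ≤ (∑ k : Fin m, Real.exp (α x' k)) / S - 1 := this
      _ = (∑ k : Fin m, Real.exp (α x' k)) / S - S / S := by
          rw [div_self (ne_of_gt hS)]
  have step2 : (∑ k : Fin m, (Real.exp (α x' k) - Real.exp (α x k))) / S
      ≤ (∑ k : Fin m, Real.exp 1 * Real.exp (α x k) * (α x' k - α x k)) / S :=
    div_le_div_of_nonneg_right (Finset.sum_le_sum fun k _ => hkey k) hS.le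
  have step3 : (∑ k : Fin m, Real.exp 1 * Real.exp (α x k) * (α x' k - α x k)) / S
      = Real.exp 1 * ∑ j : Fin d, rate x j * (x' j - x j) := by
    have hd1 : ∀ k, α x' k - α x k = ∑ j : Fin d, c k j * (x' j - x j) := by
      intro k
      rw [hα, hα, ← Finset.sum_sub_distrib]
      congr 1; ext j; ring
    have : (∑ k : Fin m, Real.exp 1 * Real.exp (α x k) * (α x' k - α x k))
        = Real.exp 1 * ∑ j : Fin d, (∑ k : Fin m, c k j * Real.exp (α x k)) * (x' j - x j) := by
      simp only [hd1, Finset.mul_sum, Finset.sum_mul]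
      rw [Finset.sum_comm]
      congr 1; ext k; congr 1; ext j; ring
    rw [this]
    rw [mul_div_assoc]
    congr 1
    rw [Finset.sum_div]
    congr 1; ext j
    rw [hrate]
    field_simp
    rw [hSdef]
  linarith [step1, step2, step3.le, step3.ge]
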